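/- arXiv:2603.29930 — 4 statements merged into one kernel-verified Lean document; each statement's English description precedes it below -/
import Mathlib

section
/- If 𝓘 ∈ 𝒟(I), then for any collection 𝓜 of subsets of I disjoint from 𝓘 (i.e., 𝓜 ⊆ 𝒫(I) \ 𝓘), there exists a maximal pairwise disjoint subfamily U ⊆ 𝓜, and moreover every pairwise disjoint subfamily of 𝒫(I) \ 𝓘 is finite. -/
/-- The class `𝒟(I)` of ideals appearing in studies of Chase's lemma. -/
def IsChaseIdeal {I : Type*} (𝓘 : Set (Set I)) : Prop :=
  Set.univ ∉ 𝓘 ∧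
  (∀ s : Set I, s.Finite → s ∈ 𝓘) ∧
  (∀ s t : Set I, s ∈ 𝓘 → t ∈ 𝓘 → s ∪ t ∈ 𝓘) ∧
  (∀ s t : Set I, s ∈ 𝓘 → t ⊆ s → t ∈ 𝓘) ∧
  (∀ U : Set (Set I), U.Countable → U.PairwiseDisjoint id →
    ∃ U₀ ⊆ U, U₀.Finite ∧ ⋃₀ (U \ U₀) ∈ 𝓘)

theorem chase_maximal_disjoint_family {I : Type*} (𝓘 : Set (Set I))
    (h𝓘 : IsChaseIdeal 𝓘) :
    (∀ 𝓜 : Set (Set I), (∀ s ∈ 𝓜, s ∉ 𝓘) →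
      ∃ U ⊆ 𝓜, U.PairwiseDisjoint id ∧
        ∀ U' : Set (Set I), U' ⊆ 𝓜 → U'.PairwiseDisjoint id → U ⊆ U' → U' = U) ∧
    (∀ U : Set (Set I), (∀ s ∈ U, s ∉ 𝓘) → U.PairwiseDisjoint id → U.Finite) := by
  obtain ⟨-, -, -, hdown, hcount⟩ := h𝓘
  constructor
  · intro 𝓜 h𝓜
    have := zorn_subset {U : Set (Set I) | U ⊆ 𝓜 ∧ U.PairwiseDisjoint id} ?_
    · obtain ⟨m, ⟨hm𝓜, hmd⟩, hmax⟩ := this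
      exact ⟨m, hm𝓜, hmd, fun U' hU'𝓜 hU'd hle =>
        le_antisymm (hmax ⟨hU'𝓜, hU'd⟩ hle) hle⟩
    · intro c hc hchain
      refine ⟨⋃₀ c, ⟨?_, ?_⟩, fun s hs => Set.subset_sUnion_of_mem hs⟩
      · exact fun s hs => by
          obtain ⟨t, htc, hst⟩ := hs
          exact (hc htc).1 hst
      · intro s hs t ht hst
        obtain ⟨S, hSc, hsS⟩ := hs
        obtain ⟨T, hTc, htT⟩ := ht
        rcases hchain.total hSc hTc with h | h
        · exact (hc hTc).2 (h hsS) htT hst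
        · exact (hc hSc).2 hsS (h htT) hst
  · intro U hU hUd
    by_contra hinf
    rw [← Set.not_infinite, not_not] at hinf
    set g : ℕ → Set I := fun n => (Set.Infinite.natEmbedding U hinf n : Set I) with hg
    have hginj : Function.Injective g := fun a b hab => by
      simpa using (Set.Infinite.natEmbedding U hinf).injective (Subtype.ext hab)
    set V : Set (Set I) := Set.range g with hV
    have hVU : V ⊆ U := Set.range_subset_iff.2 fun n => (Set.Infinite.natEmbedding U hinf n).2
    obtain ⟨U₀, hU₀V, hU₀fin, hmem⟩ :=
      hcount V (Set.countable_range g) (hUd.subset hVU)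
    have hVinf : (V \ U₀).Infinite :=
      (Set.infinite_range_of_injective hginj).diff hU₀fin
    obtain ⟨s, hs⟩ := hVinf.nonempty
    exact hU s (hVU hs.1) (hdown _ s hmem (Set.subset_sUnion_of_mem hs))
end

section
/- If 𝓘 ∈ 𝒟(I), then there exists a set M ⊆ I with M ∉ 𝓘 such that for every subset I' ⊆ M, either I' ∈ 𝓘 or M \ I' ∈ 𝓘. -/
theorem chase_exists_measure_one_set {I : Type*} (𝓘 : Set (Set I))
    (h𝓘 : IsChaseIdeal 𝓘) :
    ∃ M : Set I, M ∉ 𝓘 ∧ ∀ I' ⊆ M, I' ∈ 𝓘 ∨ M \ I' ∈ 𝓘 := by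
  classical
  obtain ⟨huniv, hfin, _hunion, hsub, hdisj⟩ := h𝓘
  by_contra hcon
  push_neg at hcon
  have key : ∀ M : Set I, M ∉ 𝓘 → ∃ I', I' ⊆ M ∧ I' ∉ 𝓘 ∧ M \ I' ∉ 𝓘 := by
    intro M hM
    obtain ⟨I', hI'M, h1, h2⟩ := hcon M hM
    exact ⟨I', hI'M, h1, h2⟩
  choose f hf1 hf2 hf3 using key
  let g : Set I → Set I := fun M => if h : M ∉ 𝓘 then M \ f M h else M
  let Ms : ℕ → Set I := fun n => g^[n] Set.univ
  have hM : ∀ n, Ms n ∉ 𝓘 := by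
    intro n
    induction n with
    | zero => exact huniv
    | succ n ih =>
      have : Ms (n + 1) = Ms n \ f (Ms n) ih := by
        simp only [Ms, Function.iterate_succ_apply', g, dif_pos ih]
      rw [this]; exact hf3 _ ih
  set A : ℕ → Set I := fun n => f (Ms n) (hM n) with hA
  have hstep : ∀ n, Ms (n + 1) = Ms n \ A n := by
    intro n
    simp only [Ms, Function.iterate_succ_apply', g, dif_pos (hM n), hA]
  have hanti : ∀ m n, m ≤ n → Ms n ⊆ Ms m := by
    intro m n hmn
    induction n with
    | zero => simp_all
    | succ n ih =>
      rcases Nat.lt_or_ge m (n + 1) with h | h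
      · have := ih (Nat.lt_succ_iff.mp h)
        rw [hstep n]
        exact (Set.diff_subset).trans this
      · have : m = n + 1 := le_antisymm hmn h
        subst this; rfl
  have hdisjA : ∀ m n, m < n → Disjoint (A m) (A n) := by
    intro m n hmn
    have h1 : A n ⊆ Ms n := hf1 _ _
    have h2 : Ms n ⊆ Ms (m + 1) := hanti _ _ hmn
    rw [hstep m] at h2
    exact Set.disjoint_sdiff_right.mono_right (h1.trans h2)
  have hAne : ∀ n, A n ≠ ∅ := by
    intro n h
    have : A n ∈ 𝓘 := by rw [h]; exact hfin ∅ Set.finite_empty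
    exact absurd this (hf2 _ (hM n))
  have hAinj : Function.Injective A := by
    intro m n h
    by_contra hne
    rcases Nat.lt_or_ge m n with hlt | hge
    · have := hdisjA m n hlt
      rw [h, disjoint_self] at this
      exact hAne n this
    · have hlt : n < m := lt_of_le_of_ne hge (Ne.symm hne)
      have := hdisjA n m hlt
      rw [h, disjoint_self] at this
      exact hAne n this
  have hPD : (Set.range A).PairwiseDisjoint id := by
    rintro s ⟨m, rfl⟩ t ⟨n, rfl⟩ hst
    rcases Nat.lt_or_ge m n with h | h
    · exact hdisjA m n h
    · have : n < m := lt_of_le_of_ne h (fun e => hst (by rw [e]))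
      exact (hdisjA n m this).symm
  obtain ⟨U₀, hU₀sub, hU₀fin, hUn⟩ := hdisj (Set.range A) (Set.countable_range A) hPD
  obtain ⟨n, hn⟩ := ((hU₀fin.preimage hAinj.injOn).infinite_compl).nonempty
  have hmem : A n ∈ Set.range A \ U₀ := ⟨⟨n, rfl⟩, hn⟩
  exact hf2 _ (hM n) (hsub _ _ hUn (Set.subset_sUnion_of_mem hmem))
end

section
/- If 𝓘 ∈ 𝒟(I), then there exists a finite pairwise disjoint family U₀ of subsets of I, each not in 𝓘, such that: (1) for each M ∈ U₀ and each I' ⊆ M, either I' ∈ 𝓘 or M \ I' ∈ 𝓘; and (2) every subset of I \ ⋃U₀ belongs to 𝓘. -/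
/-- A set is *atomic* if it is not in `𝓘` and cannot be split into two bad pieces. -/
def ChaseAtomic {I : Type*} (𝓘 : Set (Set I)) (M : Set I) : Prop :=
  M ∉ 𝓘 ∧ ∀ I' ⊆ M, I' ∈ 𝓘 ∨ M \ I' ∈ 𝓘

lemma chase_bad_family_finite {I : Type*} {𝓘 : Set (Set I)} (h𝓘 : IsChaseIdeal 𝓘)
    (U : Set (Set I)) (hd : U.PairwiseDisjoint id) (hb : ∀ M ∈ U, M ∉ 𝓘) :
    U.Finite := by
  by_contra hinf
  have hinf' : U.Infinite := hinf
  have e := hinf'.natEmbedding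
  set V : Set (Set I) := Set.range (fun n => (e n : Set I)) with hV
  have hinj : Function.Injective (fun n => (e n : Set I)) :=
    Subtype.val_injective.comp e.injective
  have hVU : V ⊆ U := by rintro x ⟨n, rfl⟩; exact (e n).2
  obtain ⟨V₀, hV₀V, hV₀fin, hV₀⟩ :=
    h𝓘.2.2.2.2 V (Set.countable_range _) (hd.subset hVU)
  have hVinf : V.Infinite := Set.infinite_range_of_injective hinj
  obtain ⟨M, hM⟩ := (hVinf.diff hV₀fin).nonempty
  exact hb M (hVU hM.1) (h𝓘.2.2.2.1 _ _ hV₀ (Set.subset_sUnion_of_mem hM))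

lemma chase_exists_atomic {I : Type*} {𝓘 : Set (Set I)} (h𝓘 : IsChaseIdeal 𝓘)
    (M : Set I) (hM : M ∉ 𝓘) : ∃ A ⊆ M, ChaseAtomic 𝓘 A := by
  by_contra h
  push_neg at h
  have key : ∀ B : Set I, B ⊆ M → B ∉ 𝓘 → ∃ C, C ⊆ B ∧ C ∉ 𝓘 ∧ B \ C ∉ 𝓘 := by
    intro B hBM hB
    have h2 := h B hBM
    unfold ChaseAtomic at h2
    push_neg at h2
    obtain ⟨C, hCB, hC1, hC2⟩ := h2 hB
    exact ⟨C, hCB, hC1, hC2⟩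
  choose! C hC using key
  set B : ℕ → Set I := fun n => Nat.rec M (fun _ Bp => Bp \ C Bp) n with hBdef
  have hBsucc : ∀ n, B (n + 1) = B n \ C (B n) := fun n => rfl
  have inv : ∀ n, B n ⊆ M ∧ B n ∉ 𝓘 := by
    intro n
    induction n with
    | zero => exact ⟨subset_rfl, hM⟩
    | succ n ih =>
      obtain ⟨h1, h2, h3⟩ := hC (B n) ih.1 ih.2
      exact ⟨Set.diff_subset.trans ih.1, h3⟩
  set A : ℕ → Set I := fun n => C (B n) with hAdef
  have hA : ∀ n, A n ⊆ B n ∧ A n ∉ 𝓘 := fun n =>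
    ⟨(hC (B n) (inv n).1 (inv n).2).1, (hC (B n) (inv n).1 (inv n).2).2.1⟩
  have hanti : Antitone B := antitone_nat_of_succ_le (fun n => by
    rw [hBsucc]; exact Set.diff_subset)
  have hdisj : ∀ m n, m < n → Disjoint (A m) (A n) := by
    intro m n hmn
    have h1 : A n ⊆ B m \ A m := by
      have := hanti hmn
      rw [hBsucc] at this
      exact (hA n).1.trans this
    exact (Set.disjoint_sdiff_right.mono_right h1).symm.symm
  have hne : ∀ n, (A n).Nonempty := by
    intro n
    rcases Set.eq_empty_or_nonempty (A n) with h0 | h0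
    · exact absurd (h0 ▸ h𝓘.2.1 ∅ Set.finite_empty) (hA n).2
    · exact h0
  have hAinj : Function.Injective A := by
    intro m n hmn
    by_contra hne'
    rcases lt_or_gt_of_ne hne' with h' | h'
    · exact (hne m).ne_empty (disjoint_self.mp (hmn ▸ hdisj m n h'))
    · exact (hne n).ne_empty (disjoint_self.mp (hmn ▸ hdisj n m h'))
  have hpd : (Set.range A).PairwiseDisjoint id := by
    rintro x ⟨m, rfl⟩ y ⟨n, rfl⟩ hxy
    rcases lt_or_gt_of_ne (fun h => hxy (congrArg A h)) with h' | h'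
    · exact hdisj m n h'
    · exact (hdisj n m h').symm
  have hfin := chase_bad_family_finite h𝓘 (Set.range A) hpd
    (by rintro x ⟨n, rfl⟩; exact (hA n).2)
  exact (Set.infinite_range_of_injective hAinj) hfin

theorem chase_finite_maximal_disjoint_system {I : Type*} (𝓘 : Set (Set I))
    (h𝓘 : IsChaseIdeal 𝓘) :
    ∃ U₀ : Set (Set I), U₀.Finite ∧ U₀.PairwiseDisjoint id ∧
      (∀ M ∈ U₀, M ∉ 𝓘) ∧
      (∀ M ∈ U₀, ∀ I' ⊆ M, I' ∈ 𝓘 ∨ M \ I' ∈ 𝓘) ∧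
      (∀ s : Set I, s ⊆ (⋃₀ U₀)ᶜ → s ∈ 𝓘) := by
  set S : Set (Set (Set I)) :=
    {U | U.PairwiseDisjoint id ∧ ∀ M ∈ U, ChaseAtomic 𝓘 M} with hS
  obtain ⟨U₀, hU₀⟩ : ∃ m, Maximal (· ∈ S) m := by
    apply zorn_subset
    intro c hcS hchain
    refine ⟨⋃₀ c, ⟨?_, ?_⟩, fun s hs => Set.subset_sUnion_of_mem hs⟩
    · rintro x ⟨u, hu, hxu⟩ y ⟨v, hv, hyv⟩ hxy
      rcases hchain.total hu hv with h | h
      · exact (hcS hv).1 (h hxu) hyv hxy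
      · exact (hcS hu).1 hxu (h hyv) hxy
    · rintro M ⟨u, hu, hMu⟩
      exact (hcS hu).2 M hMu
  obtain ⟨⟨hpd, hatom⟩, hmax⟩ := hU₀
  have hbad : ∀ M ∈ U₀, M ∉ 𝓘 := fun M hM => (hatom M hM).1
  refine ⟨U₀, chase_bad_family_finite h𝓘 U₀ hpd hbad, hpd, hbad,
    fun M hM => (hatom M hM).2, ?_⟩
  intro s hs
  by_contra hsbad
  obtain ⟨A, hAs, hAatom⟩ := chase_exists_atomic h𝓘 s hsbad
  have hAc : A ⊆ (⋃₀ U₀)ᶜ := hAs.trans hs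
  have hAdisj : ∀ M ∈ U₀, Disjoint A M := by
    intro M hM
    exact Set.disjoint_left.mpr fun x hxA hxM =>
      hAc hxA (Set.mem_sUnion.mpr ⟨M, hM, hxM⟩)
  have hins : insert A U₀ ∈ S := by
    constructor
    · intro x hx y hy hxy
      rcases hx with rfl | hx
      · rcases hy with rfl | hy
        · exact absurd rfl hxy
        · exact hAdisj y hy
      · rcases hy with rfl | hy
        · exact (hAdisj x hx).symm
        · exact hpd hx hy hxy
    · rintro M (rfl | hM)
      · exact hAatom
      · exact hatom M hM
  have : A ∈ U₀ := hmax hins (Set.subset_insert A U₀) (Set.mem_insert A U₀)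
  have hAe : A = ∅ := by
    have := disjoint_self.mp (hAdisj A this)
    exact this
  exact hAatom.1 (hAe ▸ h𝓘.2.1 ∅ Set.finite_empty)
end

section
/- Let k be a complete nonarchimedean valued field with nontrivial valuation, I a countable set, J a set, V a family of Banach k-vector spaces indexed by I, W a family of Banach k-vector spaces indexed by J, and f : ∏V → ⊕W a nonzero bounded k-linear map, where ∏V is the bounded product with sup norm and ⊕W ⊆ ∏W is the closed subspace of elements x with {j : ‖x(j)‖ > ε} finite for every ε > 0. Then for every r ∈ (0,∞) there exist r' > ‖f‖⁻¹ r, a finite subset I₀ ⊆ I, and a finite subset J₀ ⊆ J such that f maps { x ∈ ∏V : x(i) = 0 for all i ∈ I₀, and ‖x(i)‖ ≤ r' for all i } into { y ∈ ⊕W : ‖y(j)‖ ≤ r for all j ∉ J₀ }. -/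
open scoped ENNReal

/-- In an ultrametric group, adding an element of strictly smaller norm does not
decrease the norm. -/
lemma ultra_norm_add_ge {E : Type*} [SeminormedAddCommGroup E] [IsUltrametricDist E]
    {a b : E} (h : ‖b‖ < ‖a‖) : ‖a‖ ≤ ‖a + b‖ := by
  have h1 : ‖a‖ = ‖(a + b) + (-b)‖ := by rw [add_neg_cancel_right]
  have h2 := IsUltrametricDist.norm_add_le_max (a + b) (-b)
  rw [← h1, norm_neg] at h2
  rcases max_cases ‖a + b‖ ‖b‖ with ⟨he, _⟩ | ⟨he, _⟩
  · rwa [he] at h2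
  · rw [he] at h2; exact absurd (lt_of_le_of_lt h2 h) (lt_irrefl _)

set_option maxHeartbeats 1000000 in
theorem nonarchimedean_chase_lemma
    {k : Type*} [NontriviallyNormedField k] [CompleteSpace k] [IsUltrametricDist k]
    {I J : Type*} [Countable I]
    (V : I → Type*) [∀ i, NormedAddCommGroup (V i)] [∀ i, NormedSpace k (V i)]
    [∀ i, CompleteSpace (V i)] [∀ i, IsUltrametricDist (V i)]
    (W : J → Type*) [∀ j, NormedAddCommGroup (W j)] [∀ j, NormedSpace k (W j)]
    [∀ j, CompleteSpace (W j)] [∀ j, IsUltrametricDist (W j)]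
    (f : lp V ∞ →L[k] lp W ∞)
    (hf_range : ∀ x : lp V ∞, ∀ ε > (0 : ℝ), {j : J | ε < ‖f x j‖}.Finite)
    (hf_ne : f ≠ 0) :
    ∀ r : ℝ, 0 < r →
      ∃ r' : ℝ, ‖f‖⁻¹ * r < r' ∧
        ∃ I₀ : Set I, I₀.Finite ∧ ∃ J₀ : Set J, J₀.Finite ∧
          ∀ x : lp V ∞, (∀ i ∈ I₀, x i = 0) → (∀ i, ‖x i‖ ≤ r') →
            ∀ j ∉ J₀, ‖f x j‖ ≤ r := by
  intro r hr
  by_contra hcon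
  push_neg at hcon
  -- hcon : ∀ r', ‖f‖⁻¹ * r < r' → ∀ I₀, I₀.Finite → ∀ J₀, J₀.Finite →
  --   ∃ x, (∀ i ∈ I₀, x i = 0) ∧ (∀ i, ‖x i‖ ≤ r') ∧ ∃ j ∉ J₀, r < ‖f x j‖
  have hfpos : (0 : ℝ) < ‖f‖ := norm_pos_iff.mpr hf_ne
  set b : ℝ := ‖f‖⁻¹ * r with hbdef
  have hb : 0 < b := mul_pos (inv_pos.mpr hfpos) hr
  obtain ⟨g, hg⟩ := Countable.exists_injective_nat I
  -- the step existence lemma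
  have key : ∀ (n : ℕ) (r' : ℝ), b < r' → ∀ S : lp V ∞,
      ∃ (x : lp V ∞) (j : J), (∀ i, g i ≤ n → x i = 0) ∧ (∀ i, ‖x i‖ ≤ r') ∧
        ‖f S j‖ ≤ r ∧ r < ‖f x j‖ := by
    intro n r' hr' S
    have hI : ({i | g i ≤ n} : Set I).Finite := by
      have : ({i | g i ≤ n} : Set I) = g ⁻¹' (Set.Iic n) := rfl
      rw [this]
      exact (Set.finite_Iic n).preimage hg.injOn
    obtain ⟨x, h1, h2, j, hj, hj2⟩ := hcon r' hr' {i | g i ≤ n} hI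
      {j | r < ‖f S j‖} (hf_range S r hr)
    exact ⟨x, j, fun i hi => h1 i hi, h2, le_of_not_gt hj, hj2⟩
  -- state: (r', x, s, j)
  let St := ℝ × lp V ∞ × lp V ∞ × J
  let P : ℕ → St → Prop := fun n p =>
    b < p.1 ∧ (∀ i, g i ≤ n → p.2.1 i = 0) ∧ (∀ i, ‖p.2.1 i‖ ≤ p.1) ∧
      r < ‖f p.2.2.1 p.2.2.2‖
  let Q : St → St → Prop := fun p q =>
    q.1 ≤ p.1 ∧ ‖f‖ * q.1 < ‖f p.2.2.1 p.2.2.2‖ ∧ q.2.2.1 = p.2.2.1 + q.2.1 ∧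
      ‖f p.2.2.1 q.2.2.2‖ ≤ r
  have step : ∀ (n : ℕ) (p : St), P n p → ∃ q : St, P (n + 1) q ∧ Q p q := by
    intro n p hp
    obtain ⟨hp1, _hp2, _hp3, hp4⟩ := hp
    set t : ℝ := ‖f p.2.2.1 p.2.2.2‖ with htdef
    have hbt : b < ‖f‖⁻¹ * t :=
      mul_lt_mul_of_pos_left hp4 (inv_pos.mpr hfpos)
    have hmin : b < min p.1 (‖f‖⁻¹ * t) := lt_min hp1 hbt
    obtain ⟨c, hc1, hc2⟩ := exists_between hmin
    obtain ⟨x, j, hx1, hx2, hx3, hx4⟩ := key (n + 1) c hc1 p.2.2.1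
    refine ⟨(c, x, p.2.2.1 + x, j), ⟨hc1, hx1, hx2, ?_⟩, le_of_lt (lt_of_lt_of_le hc2
      (min_le_left _ _)), ?_, rfl, hx3⟩
    · -- r < ‖f (s + x) j‖
      have hmap : f (p.2.2.1 + x) = f x + f p.2.2.1 := by rw [map_add, add_comm]
      have hco : (f (p.2.2.1 + x) : ∀ j, W j) j = f x j + f p.2.2.1 j := by
        rw [hmap]; exact lp.coeFn_add (f x) (f p.2.2.1) ▸ rfl
      rw [hco]
      have hlt : ‖(f p.2.2.1 : ∀ j, W j) j‖ < ‖(f x : ∀ j, W j) j‖ :=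
        lt_of_le_of_lt hx3 hx4
      exact lt_of_lt_of_le hx4 (ultra_norm_add_ge hlt)
    · -- ‖f‖ * c < t
      have : c < ‖f‖⁻¹ * t := lt_of_lt_of_le hc2 (min_le_right _ _)
      calc ‖f‖ * c < ‖f‖ * (‖f‖⁻¹ * t) := by
            exact mul_lt_mul_of_pos_left this hfpos
        _ = t := by field_simp
  -- base state
  have hbase := key 0 (b + 1) (by linarith) 0
  have hbase2 := hbase.choose_spec
  have hb2 := hbase2.choose_spec
  let base : {p : St // P 0 p} :=
    ⟨(b + 1, hbase.choose, hbase.choose, hbase2.choose),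
      ⟨by show b < b + 1; linarith, hb2.1, hb2.2.1, hb2.2.2.2⟩⟩
  let F : ∀ n : ℕ, {p : St // P n p} → {p : St // P (n + 1) p} := fun n p =>
    ⟨(step n p.1 p.2).choose, (step n p.1 p.2).choose_spec.1⟩
  let seq : ∀ n : ℕ, {p : St // P n p} := fun n => Nat.rec base F n
  have hseq : ∀ n : ℕ, Q (seq n).1 (seq (n + 1)).1 := fun n =>
    (step n (seq n).1 (seq n).2).choose_spec.2
  set rn : ℕ → ℝ := fun n => (seq n).1.1 with hrn
  set xn : ℕ → lp V ∞ := fun n => (seq n).1.2.1 with hxn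
  set sn : ℕ → lp V ∞ := fun n => (seq n).1.2.2.1 with hsn
  set jn : ℕ → J := fun n => (seq n).1.2.2.2 with hjn
  have hP : ∀ n, b < rn n ∧ (∀ i, g i ≤ n → xn n i = 0) ∧ (∀ i, ‖xn n i‖ ≤ rn n) ∧
      r < ‖f (sn n) (jn n)‖ := fun n => (seq n).2
  have hQ : ∀ n, rn (n + 1) ≤ rn n ∧ ‖f‖ * rn (n + 1) < ‖f (sn n) (jn n)‖ ∧
      sn (n + 1) = sn n + xn (n + 1) ∧ ‖f (sn n) (jn (n + 1))‖ ≤ r := fun n => hseq n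
  have hs0 : sn 0 = xn 0 := rfl
  -- r' is antitone
  have hanti : ∀ m n : ℕ, m ≤ n → rn n ≤ rn m := by
    intro m n hmn
    induction n with
    | zero => simp_all
    | succ n ih =>
      rcases Nat.lt_or_ge m (n + 1) with h | h
      · exact le_trans (hQ n).1 (ih (Nat.lt_succ_iff.mp h))
      · have : m = n + 1 := le_antisymm hmn h
        subst this; exact le_refl _
  -- s n as a sum
  have hsum : ∀ n : ℕ, sn n = ∑ l ∈ Finset.range (n + 1), xn l := by
    intro n
    induction n with
    | zero => simpa using hs0
    | succ n ih => rw [Finset.sum_range_succ, ← ih]; exact (hQ n).2.2.1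
  -- key stability: f (sn n) (jn m) keeps its norm for n ≥ m
  have hstab : ∀ m n : ℕ, m ≤ n → ‖f (sn n) (jn m)‖ = ‖f (sn m) (jn m)‖ := by
    intro m n hmn
    induction n with
    | zero => simp_all
    | succ n ih =>
      rcases Nat.lt_or_ge m (n + 1) with h | h
      · have hm : m ≤ n := Nat.lt_succ_iff.mp h
        have ih' := ih hm
        have hxnorm : ‖f (xn (n + 1))‖ ≤ ‖f‖ * rn (n + 1) := by
          calc ‖f (xn (n + 1))‖ ≤ ‖f‖ * ‖xn (n + 1)‖ := f.le_opNorm _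
            _ ≤ ‖f‖ * rn (n + 1) := by
                have : ‖xn (n + 1)‖ ≤ rn (n + 1) := by
                  apply lp.norm_le_of_forall_le (le_of_lt (lt_trans hb (hP (n + 1)).1))
                  exact (hP (n + 1)).2.2.1
                exact mul_le_mul_of_nonneg_left this (le_of_lt hfpos)
        have hlt : ‖(f (xn (n + 1)) : ∀ j, W j) (jn m)‖ < ‖(f (sn n) : ∀ j, W j) (jn m)‖ := by
          have h1 : ‖(f (xn (n + 1)) : ∀ j, W j) (jn m)‖ ≤ ‖f (xn (n + 1))‖ :=
            lp.norm_apply_le_norm ENNReal.top_ne_zero _ _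
          have h2 : ‖f‖ * rn (n + 1) ≤ ‖f‖ * rn (m + 1) :=
            mul_le_mul_of_nonneg_left (hanti (m + 1) (n + 1) (Nat.succ_le_succ hm))
              (le_of_lt hfpos)
          have h3 : ‖f‖ * rn (m + 1) < ‖f (sn m) (jn m)‖ := (hQ m).2.1
          rw [ih']
          exact lt_of_le_of_lt (le_trans h1 hxnorm) (lt_of_le_of_lt h2 h3)
        have hmap : sn (n + 1) = sn n + xn (n + 1) := (hQ n).2.2.1
        have hco : (f (sn (n + 1)) : ∀ j, W j) (jn m)
            = f (sn n) (jn m) + f (xn (n + 1)) (jn m) := by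
          rw [hmap, map_add]; exact lp.coeFn_add (f (sn n)) (f (xn (n + 1))) ▸ rfl
        rw [hco, ← ih']
        have hge := ultra_norm_add_ge hlt
        have hle : ‖(f (sn n) : ∀ j, W j) (jn m) + (f (xn (n + 1)) : ∀ j, W j) (jn m)‖
            ≤ ‖(f (sn n) : ∀ j, W j) (jn m)‖ := by
          refine le_trans (IsUltrametricDist.norm_add_le_max _ _) ?_
          exact max_le (le_refl _) (le_of_lt hlt)
        rw [ih'] at hge hle ⊢
        exact le_antisymm hle hge
      · have : m = n + 1 := le_antisymm hmn h
        subst this; rfl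
  -- jn is injective
  have hjinj : Function.Injective jn := by
    have haux : ∀ a c : ℕ, a < c → jn a ≠ jn c := by
      intro a c hac hne
      have h1 : ‖f (sn (c - 1)) (jn c)‖ ≤ r := by
        have hc : c - 1 + 1 = c := Nat.succ_pred_eq_of_pos (Nat.zero_lt_of_lt hac)
        have := (hQ (c - 1)).2.2.2
        rwa [hc] at this
      have h2 : ‖f (sn (c - 1)) (jn a)‖ = ‖f (sn a) (jn a)‖ :=
        hstab a (c - 1) (Nat.le_sub_one_of_lt hac)
      rw [← hne] at h1
      rw [h2] at h1
      exact absurd (hP a).2.2.2 (not_lt.mpr h1)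
    intro a c h
    rcases lt_trichotomy a c with h' | h' | h'
    · exact absurd h (haux a c h')
    · exact h'
    · exact absurd h.symm (haux c a h')
  -- construct the global element x
  have hrn0 : 0 < rn 0 := lt_trans hb (hP 0).1
  let x0 : ∀ i, V i := fun i => ∑ l ∈ Finset.range (g i), xn l i
  have hx0eq : ∀ (i : I) (N : ℕ), g i ≤ N → x0 i = ∑ l ∈ Finset.range N, xn l i := by
    intro i N hN
    refine Finset.sum_subset (Finset.range_subset_range.mpr hN) ?_
    intro l _ hl
    exact ((hP l).2.1 i (by simpa [Finset.mem_range, not_lt] using hl))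
  have hx0bound : ∀ i, ‖x0 i‖ ≤ rn 0 := by
    intro i
    refine IsUltrametricDist.norm_sum_le_of_forall_le_of_nonneg (le_of_lt hrn0) ?_
    intro l _
    exact le_trans ((hP l).2.2.1 i) (hanti 0 l (Nat.zero_le l))
  have hmem : Memℓp x0 ∞ := memℓp_infty ⟨rn 0, by rintro y ⟨i, rfl⟩; exact hx0bound i⟩
  let x : lp V ∞ := ⟨x0, hmem⟩
  -- tail estimate
  have htail : ∀ m : ℕ, ‖x - sn m‖ ≤ rn (m + 1) := by
    intro m
    have hrm : 0 ≤ rn (m + 1) := le_of_lt (lt_trans hb (hP (m + 1)).1)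
    apply lp.norm_le_of_forall_le hrm
    intro i
    set N : ℕ := max (g i) (m + 1) with hN
    have hgN : g i ≤ N := le_max_left _ _
    have hmN : m + 1 ≤ N := le_max_right _ _
    have hsnm : (sn m : ∀ i, V i) i = ∑ l ∈ Finset.range (m + 1), xn l i := by
      rw [hsum m, lp.coeFn_sum]; exact Finset.sum_apply _ _ _
    have hcoe : ((x - sn m : lp V ∞) : ∀ i', V i') i = x0 i - (sn m : ∀ i', V i') i := by
      rw [lp.coeFn_sub, Pi.sub_apply]
    rw [hcoe, hsnm, hx0eq i N hgN, ← Finset.sum_Ico_eq_sub _ hmN]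
    refine IsUltrametricDist.norm_sum_le_of_forall_le_of_nonneg hrm ?_
    intro l hl
    have hml : m + 1 ≤ l := (Finset.mem_Ico.mp hl).1
    exact le_trans ((hP l).2.2.1 i) (hanti (m + 1) l hml)
  -- the set {j | r < ‖f x j‖} contains all jn m
  have hfinal : ∀ m : ℕ, r < ‖f x (jn m)‖ := by
    intro m
    have h1 : ‖f (x - sn m)‖ ≤ ‖f‖ * rn (m + 1) := by
      calc ‖f (x - sn m)‖ ≤ ‖f‖ * ‖x - sn m‖ := f.le_opNorm _
        _ ≤ ‖f‖ * rn (m + 1) := mul_le_mul_of_nonneg_left (htail m) (le_of_lt hfpos)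
    have h2 : ‖(f (x - sn m) : ∀ j, W j) (jn m)‖ < ‖(f (sn m) : ∀ j, W j) (jn m)‖ :=
      lt_of_le_of_lt (le_trans (lp.norm_apply_le_norm ENNReal.top_ne_zero _ _) h1) (hQ m).2.1
    have hco : (f x : ∀ j, W j) (jn m) = f (sn m) (jn m) + f (x - sn m) (jn m) := by
      have hx : f x = f (sn m) + f (x - sn m) := by
        rw [← map_add]; congr 1; abel
      rw [hx, lp.coeFn_add, Pi.add_apply]
    rw [hco]
    exact lt_of_lt_of_le (hP m).2.2.2 (ultra_norm_add_ge h2)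
  have hsub : Set.range jn ⊆ {j : J | r < ‖f x j‖} := by
    rintro j ⟨m, rfl⟩; exact hfinal m
  have hfin : (Set.range jn).Finite := (hf_range x r hr).subset hsub
  exact absurd hfin (Set.infinite_range_of_injective hjinj)
end
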